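/- Let α > 0, let n ∈ ℕ, and let x < b be real numbers. Then the right-sided Riemann–Liouville fractional integral of order α of the power function τ ↦ τ^n satisfies (1/Γ(α)) ∫_x^b (τ - x)^(α-1) τ^n dτ = n! · (b - x)^α · Σ_{k=0}^{n} b^(n-k) (x - b)^k / ((n - k)! · Γ(α + k + 1)). -/

import Mathlib

open MeasureTheory Real intervalIntegral



lemma real_beta_nat (α : ℝ) (hα : 0 < α) (k : ℕ) :
    ∫ s in (0:ℝ)..1, s ^ (α - 1) * (1 - s) ^ k =
      Real.Gamma α * k.factorial / Real.Gamma (α + k + 1) := by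
  have hB : Complex.betaIntegral α (k + 1) =
      ((Real.Gamma α * k.factorial / Real.Gamma (α + k + 1) : ℝ) : ℂ) := by
    have h1 : (0:ℝ) < (α + k + 1) := by positivity
    have hG : Complex.Gamma (α + k + 1 : ℝ) ≠ 0 := by
      rw [Complex.Gamma_ofReal]
      exact_mod_cast (Real.Gamma_pos_of_pos h1).ne'
    have := Complex.Gamma_mul_Gamma_eq_betaIntegral (s := α) (t := (k:ℂ) + 1)
      (by simpa using hα) (by simp; positivity)
    have hcast : (α : ℂ) + ((k:ℂ) + 1) = ((α + k + 1 : ℝ) : ℂ) := by push_cast; ring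
    rw [hcast] at this
    have hGk : Complex.Gamma ((k:ℂ) + 1) = (k.factorial : ℂ) := by
      simpa using Complex.Gamma_nat_eq_factorial k
    rw [hGk, Complex.Gamma_ofReal, Complex.Gamma_ofReal] at this
    push_cast
    rw [eq_div_iff (by exact_mod_cast (Real.Gamma_pos_of_pos h1).ne')]
    linear_combination -this
  have heq : ∫ s in (0:ℝ)..1, ((s ^ (α - 1) * (1 - s) ^ k : ℝ) : ℂ) =
      Complex.betaIntegral α (k + 1) := by
    rw [Complex.betaIntegral]
    apply intervalIntegral.integral_congr
    intro s hs
    rw [Set.uIcc_of_le (by norm_num : (0:ℝ) ≤ 1)] at hs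
    push_cast
    rw [Complex.ofReal_cpow hs.1]
    have : ((k:ℂ) + 1 - 1) = (k:ℂ) := by ring
    rw [this, Complex.cpow_natCast]
    push_cast
    ring
  have := intervalIntegral.integral_ofReal (f := fun s => s ^ (α - 1) * (1 - s) ^ k)
    (a := (0:ℝ)) (b := 1) (μ := volume)
  rw [heq, hB] at this
  exact_mod_cast this.symm

lemma key_integrable (α x b : ℝ) (hα : 0 < α) (k : ℕ) :
    IntervalIntegrable (fun τ => (τ - x) ^ (α - 1) * (τ - b) ^ k) volume x b := by
  have h1 : IntervalIntegrable (fun u : ℝ => u ^ (α - 1)) volume 0 (b - x) :=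
    intervalIntegrable_rpow' (by linarith)
  have h2 := h1.comp_sub_right x
  simp only [zero_add, sub_add_cancel] at h2
  exact h2.mul_continuousOn ((continuous_id.sub continuous_const).pow k).continuousOn

lemma key_integral (α x b : ℝ) (hα : 0 < α) (k : ℕ) (hxb : x < b) :
    ∫ τ in x..b, (τ - x) ^ (α - 1) * (b - τ) ^ k =
      (b - x) ^ α * (b - x) ^ k * Real.Gamma α * k.factorial / Real.Gamma (α + k + 1) := by
  have hc : (0:ℝ) < b - x := by linarith
  have hbeta : ∫ s in (0:ℝ)..1, s ^ (α - 1) * (1 - s) ^ k =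
      Real.Gamma α * k.factorial / Real.Gamma (α + k + 1) := real_beta_nat α hα k
  have hsub := intervalIntegral.smul_integral_comp_mul_add
    (f := fun τ => (τ - x) ^ (α - 1) * (b - τ) ^ k) (a := (0:ℝ)) (b := 1) (b - x) x
  simp only [mul_zero, zero_add, mul_one, sub_add_cancel] at hsub
  rw [← hsub]
  have hcongr : ∫ s in (0:ℝ)..1, ((b - x) * s + x - x) ^ (α - 1) * (b - ((b - x) * s + x)) ^ k =
      ∫ s in (0:ℝ)..1, ((b - x) ^ (α - 1) * (b - x) ^ k) * (s ^ (α - 1) * (1 - s) ^ k) := by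
    apply intervalIntegral.integral_congr
    intro s hs
    rw [Set.uIcc_of_le (by norm_num : (0:ℝ) ≤ 1)] at hs
    have h1 : (b - x) * s + x - x = (b - x) * s := by ring
    have h2 : b - ((b - x) * s + x) = (b - x) * (1 - s) := by ring
    simp only []
    rw [h1, h2, Real.mul_rpow hc.le hs.1, mul_pow]
    ring
  rw [hcongr, intervalIntegral.integral_const_mul, hbeta, smul_eq_mul]
  rw [show (b - x) ^ (α - 1) = (b - x) ^ α / (b - x) from by
    rw [Real.rpow_sub hc, Real.rpow_one]]
  field_simp
theorem rl_right_integral_monomial (α : ℝ) (hα : 0 < α) (n : ℕ) (x b : ℝ) (hxb : x < b) :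
    (1 / Real.Gamma α) * ∫ τ in x..b, (τ - x) ^ (α - 1) * τ ^ n =
      (n.factorial : ℝ) * (b - x) ^ α *
        ∑ k ∈ Finset.range (n + 1),
          b ^ (n - k) * (x - b) ^ k / ((n - k).factorial * Real.Gamma (α + k + 1)) := by
  have hGα : Real.Gamma α ≠ 0 := (Real.Gamma_pos_of_pos hα).ne'
  have hexp : ∀ τ : ℝ, (τ - x) ^ (α - 1) * τ ^ n =
      ∑ k ∈ Finset.range (n + 1),
        (τ - x) ^ (α - 1) * (τ - b) ^ k * (b ^ (n - k) * (n.choose k : ℝ)) := by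
    intro τ
    have : τ ^ n = ((τ - b) + b) ^ n := by ring_nf
    rw [this, add_pow, Finset.mul_sum]
    apply Finset.sum_congr rfl
    intro k _
    ring
  have hint : ∫ τ in x..b, (τ - x) ^ (α - 1) * τ ^ n =
      ∑ k ∈ Finset.range (n + 1),
        ∫ τ in x..b, (τ - x) ^ (α - 1) * (τ - b) ^ k * (b ^ (n - k) * (n.choose k : ℝ)) := by
    rw [intervalIntegral.integral_congr (g := fun τ => ∑ k ∈ Finset.range (n + 1),
        (τ - x) ^ (α - 1) * (τ - b) ^ k * (b ^ (n - k) * (n.choose k : ℝ)))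
      (fun τ _ => hexp τ)]
    exact intervalIntegral.integral_finset_sum
      (fun k _ => (key_integrable α x b hα k).mul_const _)
  rw [hint, Finset.mul_sum, Finset.mul_sum]
  apply Finset.sum_congr rfl
  intro k hk
  have hkn : k ≤ n := Nat.lt_succ_iff.mp (Finset.mem_range.mp hk)
  have hsign : ∀ τ : ℝ, (τ - b) ^ k = (-1 : ℝ) ^ k * (b - τ) ^ k := by
    intro τ; rw [← neg_pow]; ring_nf
  have : ∫ τ in x..b, (τ - x) ^ (α - 1) * (τ - b) ^ k * (b ^ (n - k) * (n.choose k : ℝ)) =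
      ((-1 : ℝ) ^ k * (b ^ (n - k) * (n.choose k : ℝ))) *
        ∫ τ in x..b, (τ - x) ^ (α - 1) * (b - τ) ^ k := by
    rw [← intervalIntegral.integral_const_mul]
    apply intervalIntegral.integral_congr
    intro τ _
    simp only []
    rw [hsign τ]; ring
  rw [this, key_integral α x b hα k hxb]
  have hGk : Real.Gamma (α + k + 1) ≠ 0 :=
    (Real.Gamma_pos_of_pos (by positivity)).ne'
  have hfac : ((n - k).factorial : ℝ) ≠ 0 := Nat.cast_ne_zero.mpr (Nat.factorial_ne_zero _)
  have hchoose : ((n.choose k : ℝ)) * k.factorial * (n - k).factorial = n.factorial := by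
    exact_mod_cast congrArg Nat.cast (Nat.choose_mul_factorial_mul_factorial hkn)
  have hxbk : (x - b) ^ k = (-1 : ℝ) ^ k * (b - x) ^ k := by
    rw [← neg_pow]; ring_nf
  rw [hxbk]
  field_simp
  linear_combination (b^(n-k) * (b-x)^α * (b-x)^k) * hchoose
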